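/- (Ditor) For every positive integer n, every n-ladder has cardinality at most ℵ_{n-1}. -/

import Mathlib

open Cardinal Set

universe u

section FreeSet

variable {X : Type u}

/-- Closure lemma: any set of cardinality at most `κ` (infinite) is contained in a set of
cardinality at most `κ` closed under a finite-set-valued operation on finite subsets. -/
private lemma exists_closed_set (f : Finset X → Set X) (hf : ∀ s, (f s).Finite)
    {κ : Cardinal.{u}} (hκ : ℵ₀ ≤ κ) (B₀ : Set X) (hB₀ : #B₀ ≤ κ) :
    ∃ B : Set X, B₀ ⊆ B ∧ #B ≤ κ ∧ ∀ s : Finset X, ↑s ⊆ B → f s ⊆ B := by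
  classical
  cases finite_or_infinite X with
  | inl hfin =>
    refine ⟨Set.univ, subset_univ _, ?_, fun s _ => subset_univ _⟩
    rw [mk_univ]
    exact le_trans (lt_aleph0_of_finite X).le hκ
  | inr hinf =>
    let e : ℕ ↪ X := Infinite.natEmbedding X
    let step : Set X → Set X := fun C => C ∪ ⋃ s : {s : Finset X // ↑s ⊆ C}, f s
    let C : ℕ → Set X := fun m => Nat.rec (B₀ ∪ Set.range e) (fun _ D => step D) m
    have hCs : ∀ m, C (m + 1) = step (C m) := fun m => rfl
    have hmono : Monotone C := monotone_nat_of_le_succ (fun m => by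
      rw [hCs]; exact subset_union_left)
    have hrange : ∀ m, Set.range e ⊆ C m := by
      intro m
      induction m with
      | zero => exact subset_union_right
      | succ m ih => rw [hCs]; exact ih.trans subset_union_left
    have hinfC : ∀ m, Infinite ↥(C m) := fun m =>
      ((infinite_range_of_injective e.injective).mono (hrange m)).to_subtype
    have hcard : ∀ m, #↥(C m) ≤ κ := by
      intro m
      induction m with
      | zero =>
        refine le_trans (mk_union_le _ _) ?_
        have h1 : #↥(Set.range ⇑e) ≤ ℵ₀ := by
          haveI := (Set.countable_range ⇑e).to_subtype
          exact mk_le_aleph0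
        calc #↥B₀ + #↥(Set.range ⇑e) ≤ κ + κ := add_le_add hB₀ (h1.trans hκ)
          _ = κ := add_eq_self hκ
      | succ m ih =>
        rw [hCs]
        refine le_trans (mk_union_le _ _) ?_
        have hidx : #{s : Finset X // ↑s ⊆ C m} ≤ κ := by
          haveI hinfm := hinfC m
          haveI hdec : DecidablePred (· ∈ C m) := Classical.decPred _
          have hinj : Function.Injective
              (fun s : {s : Finset X // ↑s ⊆ C m} =>
                @Finset.subtype X (· ∈ C m) hdec s.1) := by
            intro s t hst
            apply Subtype.ext
            have h1 := congrArg (Finset.map (Function.Embedding.subtype (· ∈ C m))) hst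
            simp only at h1
            rw [@Finset.subtype_map X (· ∈ C m) hdec, @Finset.subtype_map X (· ∈ C m) hdec] at h1
            rwa [@Finset.filter_true_of_mem X (· ∈ C m) hdec s.1 (fun x hx => s.2 hx),
              @Finset.filter_true_of_mem X (· ∈ C m) hdec t.1 (fun x hx => t.2 hx)] at h1
          calc #{s : Finset X // ↑s ⊆ C m} ≤ #(Finset ↥(C m)) := mk_le_of_injective hinj
            _ = #↥(C m) := @mk_finset_of_infinite _ hinfm
            _ ≤ κ := ih
        have hU : #(⋃ s : {s : Finset X // ↑s ⊆ C m}, f s.1) ≤ κ := by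
          refine le_trans (mk_iUnion_le _) ?_
          have h2 : ⨆ s : {s : Finset X // ↑s ⊆ C m}, #↥(f s.1) ≤ ℵ₀ := by
            have : Nonempty {s : Finset X // ↑s ⊆ C m} := ⟨⟨∅, by simp⟩⟩
            exact ciSup_le' fun s => (hf s.1).lt_aleph0.le
          calc #{s : Finset X // ↑s ⊆ C m} * ⨆ s : {s : Finset X // ↑s ⊆ C m}, #↥(f s.1)
              ≤ κ * κ := mul_le_mul' hidx (h2.trans hκ)
            _ = κ := mul_eq_self hκ
        calc #↥(C m) + _ ≤ κ + κ := add_le_add ih hU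
          _ = κ := add_eq_self hκ
    refine ⟨⋃ m, C m, ?_, ?_, ?_⟩
    · exact subset_union_left.trans (subset_iUnion C 0)
    · have : (⋃ m, C m) = ⋃ m : ULift.{u} ℕ, C m.down := by
        ext x; simp [ULift.exists]
      rw [this]
      refine le_trans (mk_iUnion_le _) ?_
      have h3 : ⨆ m : ULift.{u} ℕ, #↥(C m.down) ≤ κ := ciSup_le' fun m => hcard m.down
      calc #(ULift.{u} ℕ) * ⨆ m : ULift.{u} ℕ, #↥(C m.down)
          ≤ ℵ₀ * κ := mul_le_mul' mk_le_aleph0 h3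
        _ ≤ κ * κ := mul_le_mul' hκ le_rfl
        _ = κ := mul_eq_self hκ
    · intro s hs
      have hstage : ∃ m, ↑s ⊆ C m := by
        classical
        induction s using Finset.induction_on with
        | empty => exact ⟨0, by simp⟩
        | @insert a t hat ih =>
          have h1 : (a : X) ∈ ⋃ m, C m := hs (by simp)
          have h2 : (↑t : Set X) ⊆ ⋃ m, C m := fun x hx => hs (by simp [hx])
          obtain ⟨m1, hm1⟩ := mem_iUnion.mp h1
          obtain ⟨m2, hm2⟩ := ih h2
          refine ⟨max m1 m2, ?_⟩
          intro x hx
          rcases Finset.mem_insert.mp (by exact_mod_cast hx) with rfl | hxt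
          · exact hmono (le_max_left m1 m2) hm1
          · exact hmono (le_max_right m1 m2) (hm2 hxt)
      obtain ⟨m, hm⟩ := hstage
      have : f s ⊆ C (m + 1) := by
        rw [hCs]
        refine subset_union_right.trans' ?_
        exact subset_iUnion (fun s : {s : Finset X // ↑s ⊆ C m} => f s.1) ⟨s, hm⟩
      exact this.trans (subset_iUnion C (m + 1))

/-- Kuratowski's free set theorem: if `#X ≥ ℵ_k` and `f` assigns a finite set to each
finite subset of `X`, then there is a "free" set of size `k + 1`. -/
private lemma exists_free_set : ∀ (k : ℕ) {X : Type u} [DecidableEq X] (f : Finset X → Set X),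
    (∀ s, (f s).Finite) → Cardinal.aleph (k : Ordinal) ≤ #X →
    ∃ s : Finset X, s.card = k + 1 ∧ ∀ a ∈ s, a ∉ f (s.erase a) := by
  intro k
  induction k with
  | zero =>
    intro X _ f hf hX
    have : Infinite X := Cardinal.infinite_iff.mpr (by
      rwa [Nat.cast_zero, aleph_zero] at hX)
    obtain ⟨a, ha⟩ := (hf ∅).infinite_compl.nonempty
    refine ⟨{a}, rfl, ?_⟩
    intro b hb
    rw [Finset.mem_singleton] at hb
    subst hb
    simpa [Finset.erase_singleton] using ha
  | succ k ih =>
    intro X _ f hf hX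
    classical
    have hk : Cardinal.aleph (k : Ordinal) ≤ #X :=
      le_trans (aleph_le_aleph.mpr (by exact_mod_cast Nat.le_succ k)) hX
    obtain ⟨B₀, hB₀⟩ := Cardinal.le_mk_iff_exists_set.mp hk
    obtain ⟨B, hB₀B, hBcard, hBclosed⟩ :=
      exists_closed_set f hf (aleph0_le_aleph (k : Ordinal)) B₀ hB₀.le
    have hBk : Cardinal.aleph (k : Ordinal) ≤ #B :=
      hB₀.symm.le.trans (mk_le_mk_of_subset hB₀B)
    have hBlt : #B < #X := by
      refine lt_of_le_of_lt hBcard (lt_of_lt_of_le ?_ hX)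
      rw [aleph_lt_aleph]
      exact_mod_cast Nat.lt_succ_self k
    obtain ⟨a0, ha0⟩ : ∃ a : X, a ∉ B := by
      by_contra hc
      push_neg at hc
      have : B = Set.univ := Set.eq_univ_of_forall hc
      rw [this, mk_univ] at hBlt
      exact lt_irrefl _ hBlt
    let emb : ↥B ↪ X := Function.Embedding.subtype _
    let g : Finset ↥B → Set ↥B := fun t => Subtype.val ⁻¹' (f (insert a0 (t.map emb)))
    have hg : ∀ t, (g t).Finite := fun t =>
      Set.Finite.preimage (Subtype.val_injective.injOn) (hf _)
    obtain ⟨t, htcard, htfree⟩ := ih g hg hBk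
    have hmapB : (↑(t.map emb) : Set X) ⊆ B := by
      intro x hx
      obtain ⟨y, _, rfl⟩ := Finset.mem_map.mp (by exact_mod_cast hx)
      exact y.2
    have ha0t : a0 ∉ t.map emb := fun hmem => ha0 (hmapB hmem)
    refine ⟨insert a0 (t.map emb), ?_, ?_⟩
    · rw [Finset.card_insert_of_notMem ha0t, Finset.card_map, htcard]
    · intro a ha
      rcases Finset.mem_insert.mp ha with rfl | hmem
      · rw [Finset.erase_insert ha0t]
        intro hcontra
        exact ha0 (hBclosed _ hmapB hcontra)
      · obtain ⟨x, hxt, rfl⟩ := Finset.mem_map.mp hmem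
        have hne : a0 ≠ emb x := fun hx => ha0 (hx ▸ x.2)
        rw [Finset.erase_insert_of_ne hne, ← Finset.map_erase]
        intro hcontra
        exact htfree x hxt hcontra

end FreeSet

/-- `P` is an `n`-ladder: a nonempty lower finite lattice in which every element
has at most `n` lower covers. -/
def IsNLadder (P : Type*) [Lattice P] (n : ℕ) : Prop :=
  Nonempty P ∧ (∀ x : P, (Set.Iic x).Finite) ∧ ∀ x : P, {y : P | y ⋖ x}.ncard ≤ n

/-- Ditor: for every positive integer `n`, every `n`-ladder has
cardinality at most `ℵ_{n-1}`. -/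
theorem ladder_card_le {P : Type u} [Lattice P] (n : ℕ) (hn : 0 < n)
    (h : IsNLadder P n) :
    Cardinal.mk P ≤ Cardinal.aleph ((n - 1 : ℕ) : Ordinal) := by
  classical
  obtain ⟨hne, hfin, hcov⟩ := h
  by_contra hcard
  push_neg at hcard
  have hale : Cardinal.aleph ((n : ℕ) : Ordinal) ≤ #P := by
    have h1 : ((n : ℕ) : Ordinal) = Order.succ ((n - 1 : ℕ) : Ordinal) := by
      conv_lhs => rw [show n = (n - 1) + 1 from (Nat.succ_pred_eq_of_pos hn).symm]
      rw [Nat.cast_succ, Ordinal.add_one_eq_succ]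
    rw [h1, aleph_succ]
    exact Order.succ_le_of_lt hcard
  -- the finite-set-valued function for the free set theorem
  set f : Finset P → Set P :=
    fun s => if h : s.Nonempty then Set.Iic (s.sup' h id) else ∅ with hf_def
  have hf : ∀ s, (f s).Finite := by
    intro s
    by_cases hs : s.Nonempty
    · simp only [hf_def, dif_pos hs]
      exact hfin _
    · simp only [hf_def, dif_neg hs]
      exact Set.finite_empty
  obtain ⟨s, hscard, hsfree⟩ := exists_free_set n f hf hale
  have hsne : s.Nonempty := Finset.card_pos.mp (by omega)
  set b : P := s.sup' hsne id with hb_def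
  -- for each a ∈ s, find a lower cover of b above the sup of the rest
  have key : ∀ a, a ∈ s → ∃ c, c ⋖ b ∧ ∀ x ∈ s.erase a, x ≤ c := by
    intro a ha
    have hesne : (s.erase a).Nonempty := by
      rw [← Finset.card_pos, Finset.card_erase_of_mem ha, hscard]
      omega
    set ba : P := (s.erase a).sup' hesne id with hba_def
    have hba_le : ba ≤ b := Finset.sup'_le _ _ fun x hx =>
      Finset.le_sup' id (Finset.mem_of_mem_erase hx)
    have hnle : ¬ a ≤ ba := by
      have := hsfree a ha
      simp only [hf_def, dif_pos hesne] at this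
      exact fun hle => this hle
    have ha_le_b : a ≤ b := Finset.le_sup' id ha
    have hba_lt : ba < b := lt_of_le_of_ne hba_le (fun heq => hnle (heq ▸ ha_le_b))
    -- find a maximal element of {y | ba ≤ y ∧ y < b}
    have hTfin : {y : P | ba ≤ y ∧ y < b}.Finite :=
      (hfin b).subset fun y hy => hy.2.le
    have hTne : {y : P | ba ≤ y ∧ y < b}.Nonempty := ⟨ba, le_rfl, hba_lt⟩
    obtain ⟨c, hcT, hcmax⟩ : ∃ c ∈ {y : P | ba ≤ y ∧ y < b}, ∀ z ∈ {y : P | ba ≤ y ∧ y < b}, id c ≤ id z → id c = id z := by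
      obtain ⟨c, hc⟩ := Set.Finite.exists_maximal hTfin hTne
      exact ⟨c, hc.1, fun z hz hcz => le_antisymm hcz (hc.2 hz hcz)⟩
    refine ⟨c, ⟨hcT.2, ?_⟩, fun x hx => le_trans (Finset.le_sup' id hx) hcT.1⟩
    intro z hcz hzb
    exact absurd (hcmax z ⟨hcT.1.trans hcz.le, hzb⟩ hcz.le) hcz.ne
  choose! c hc_cov hc_ge using key
  -- the images c a for a ∈ s are n+1 distinct lower covers of b
  have hinj : Set.InjOn c ↑s := by
    intro a1 h1 a2 h2 heq
    by_contra hne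
    have hble : b ≤ c a1 := by
      refine Finset.sup'_le _ _ fun x hx => ?_
      by_cases hxa : x = a1
      · subst hxa
        rw [heq]
        exact hc_ge a2 h2 x (Finset.mem_erase.mpr ⟨hne, h1⟩)
      · exact hc_ge a1 h1 x (Finset.mem_erase.mpr ⟨hxa, hx⟩)
    exact absurd hble (hc_cov a1 h1).lt.not_ge
  have hsub : c '' ↑s ⊆ {y : P | y ⋖ b} := by
    rintro _ ⟨a, ha, rfl⟩
    exact hc_cov a ha
  have hcovfin : {y : P | y ⋖ b}.Finite := (hfin b).subset fun y hy => hy.le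
  have h1 : (c '' ↑s).ncard = n + 1 := by
    rw [Set.ncard_image_of_injOn hinj, Set.ncard_coe_finset, hscard]
  have h2 : (c '' ↑s).ncard ≤ {y : P | y ⋖ b}.ncard :=
    Set.ncard_le_ncard hsub hcovfin
  have := hcov b
  omega
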